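/- The arc length L = ∫_0^1 √(1 + f(t)²) dt of the graph of the antiderivative F(x) = ∫_0^x f(t) dt over [0,1] satisfies √5 / 2 ≤ L ≤ 3/2. -/
import Mathlib


open intervalIntegral Set

theorem bourbaki_stmt (f : ℝ → ℝ)
    (hcont : ContinuousOn f (Set.Icc 0 1))
    (h0 : f 0 = 0) (h1 : f 1 = 1)
    (hw1 : ∀ x ∈ Set.Icc (0:ℝ) 1, f (x / 3) = (2/3) * f x)
    (hw2 : ∀ x ∈ Set.Icc (0:ℝ) 1, f ((2 - x) / 3) = (1/3) * (1 + f x))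
    (hw3 : ∀ x ∈ Set.Icc (0:ℝ) 1, f ((2 + x) / 3) = 1/3 + (2/3) * f x) :
    Real.sqrt 5 / 2 ≤ (∫ t in (0:ℝ)..1, Real.sqrt (1 + (f t) ^ 2)) ∧ (∫ t in (0:ℝ)..1, Real.sqrt (1 + (f t) ^ 2)) ≤ 3/2 := by
  have huIcc : Set.uIcc (0:ℝ) 1 = Set.Icc 0 1 := Set.uIcc_of_le (by norm_num)
  -- integrability of f on subintervals
  have hInt : ∀ a b : ℝ, Set.uIcc a b ⊆ Set.Icc 0 1 → IntervalIntegrable f MeasureTheory.volume a b := by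
    intro a b hab
    exact (hcont.mono hab).intervalIntegrable
  have hI01 : IntervalIntegrable f MeasureTheory.volume 0 1 := hInt 0 1 huIcc.subset
  -- f is bounded: 0 ≤ f ≤ 1 on [0,1]
  have hne : (Set.Icc (0:ℝ) 1).Nonempty := ⟨0, by norm_num⟩
  have hbd : ∀ x ∈ Set.Icc (0:ℝ) 1, 0 ≤ f x ∧ f x ≤ 1 := by
    obtain ⟨xM, hxM, hM⟩ := isCompact_Icc.exists_isMaxOn hne hcont
    obtain ⟨xm, hxm, hm⟩ := isCompact_Icc.exists_isMinOn hne hcont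
    have hM1 : (1:ℝ) ≤ f xM := by simpa [h1] using hM (Set.mem_Icc.mpr ⟨zero_le_one, le_refl 1⟩)
    have hm0 : f xm ≤ 0 := by simpa [h0] using hm (Set.mem_Icc.mpr ⟨le_refl 0, zero_le_one⟩)
    have hMle : f xM ≤ 1 := by
      obtain ⟨hxM0, hxM1⟩ := hxM
      rcases le_or_gt xM (1/3) with h | h
      · have hy : (3*xM) ∈ Set.Icc (0:ℝ) 1 := ⟨by linarith, by linarith⟩
        have := hw1 (3*xM) hy
        have hx3 : 3*xM/3 = xM := by ring
        rw [hx3] at this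
        have hle : f (3*xM) ≤ f xM := hM hy
        linarith
      rcases le_or_gt xM (2/3) with h2 | h2
      · have hy : (2 - 3*xM) ∈ Set.Icc (0:ℝ) 1 := ⟨by linarith, by linarith⟩
        have heq := hw2 (2 - 3*xM) hy
        have hx3 : (2 - (2 - 3*xM))/3 = xM := by ring
        rw [hx3] at heq
        have hle : f (2 - 3*xM) ≤ f xM := hM hy
        linarith
      · have hy : (3*xM - 2) ∈ Set.Icc (0:ℝ) 1 := ⟨by linarith, by linarith⟩
        have heq := hw3 (3*xM - 2) hy
        have hx3 : (2 + (3*xM - 2))/3 = xM := by ring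
        rw [hx3] at heq
        have hle : f (3*xM - 2) ≤ f xM := hM hy
        linarith
    have hmge : 0 ≤ f xm := by
      obtain ⟨hxm0, hxm1⟩ := hxm
      rcases le_or_gt xm (1/3) with h | h
      · have hy : (3*xm) ∈ Set.Icc (0:ℝ) 1 := ⟨by linarith, by linarith⟩
        have heq := hw1 (3*xm) hy
        have hx3 : 3*xm/3 = xm := by ring
        rw [hx3] at heq
        have hle : f xm ≤ f (3*xm) := hm hy
        linarith
      rcases le_or_gt xm (2/3) with h2 | h2
      · have hy : (2 - 3*xm) ∈ Set.Icc (0:ℝ) 1 := ⟨by linarith, by linarith⟩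
        have heq := hw2 (2 - 3*xm) hy
        have hx3 : (2 - (2 - 3*xm))/3 = xm := by ring
        rw [hx3] at heq
        have hle : f xm ≤ f (2 - 3*xm) := hm hy
        linarith
      · have hy : (3*xm - 2) ∈ Set.Icc (0:ℝ) 1 := ⟨by linarith, by linarith⟩
        have heq := hw3 (3*xm - 2) hy
        have hx3 : (2 + (3*xm - 2))/3 = xm := by ring
        rw [hx3] at heq
        have hle : f xm ≤ f (3*xm - 2) := hm hy
        linarith
    intro x hx
    exact ⟨le_trans hmge (hm hx), le_trans (hM hx) hMle⟩
  -- compute the mean: ∫ f = 1/2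
  set I : ℝ := ∫ t in (0:ℝ)..1, f t with hIdef
  have hIval : I = 1/2 := by
    have hA : (∫ x in (0:ℝ)..1, f (x/3)) = 3 * ∫ x in (0:ℝ)..(1/3), f x := by
      rw [intervalIntegral.integral_comp_div f (by norm_num : (3:ℝ) ≠ 0)]
      norm_num [smul_eq_mul]
    have hB : (∫ x in (0:ℝ)..1, f ((2 - x)/3)) = 3 * ∫ x in (1/3 : ℝ)..(2/3), f x := by
      have : ∀ x : ℝ, (2 - x)/3 = 2/3 - (1/3)*x := by intro x; ring
      simp_rw [this]
      rw [intervalIntegral.integral_comp_sub_mul f (by norm_num : (1/3:ℝ) ≠ 0) (2/3)]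
      norm_num [smul_eq_mul]
    have hC : (∫ x in (0:ℝ)..1, f ((2 + x)/3)) = 3 * ∫ x in (2/3 : ℝ)..1, f x := by
      have : ∀ x : ℝ, (2 + x)/3 = 2/3 + (1/3)*x := by intro x; ring
      simp_rw [this]
      rw [intervalIntegral.integral_comp_add_mul f (by norm_num : (1/3:ℝ) ≠ 0) (2/3)]
      norm_num [smul_eq_mul]
    have hA' : (∫ x in (0:ℝ)..1, f (x/3)) = (2/3) * I := by
      rw [hIdef, ← intervalIntegral.integral_const_mul]
      apply intervalIntegral.integral_congr
      intro x hx
      rw [huIcc] at hx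
      exact hw1 x hx
    have hB' : (∫ x in (0:ℝ)..1, f ((2 - x)/3)) = (1/3) * (1 + I) := by
      have e1 : (∫ x in (0:ℝ)..1, f ((2 - x)/3)) = ∫ x in (0:ℝ)..1, (1/3) * (1 + f x) := by
        apply intervalIntegral.integral_congr
        intro x hx
        rw [huIcc] at hx
        exact hw2 x hx
      rw [e1, intervalIntegral.integral_const_mul,
        intervalIntegral.integral_add intervalIntegrable_const hI01]
      simp [hIdef]
    have hC' : (∫ x in (0:ℝ)..1, f ((2 + x)/3)) = 1/3 + (2/3) * I := by
      have e1 : (∫ x in (0:ℝ)..1, f ((2 + x)/3)) = ∫ x in (0:ℝ)..1, (1/3 + (2/3) * f x) := by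
        apply intervalIntegral.integral_congr
        intro x hx
        rw [huIcc] at hx
        exact hw3 x hx
      rw [e1, intervalIntegral.integral_add intervalIntegrable_const
        ((hI01.const_mul (2/3 : ℝ)) : IntervalIntegrable (fun x => (2/3 : ℝ) * f x) MeasureTheory.volume 0 1),
        intervalIntegral.integral_const_mul]
      simp [hIdef]
    have hsplit : I = (∫ x in (0:ℝ)..(1/3), f x) + (∫ x in (1/3:ℝ)..(2/3), f x) + (∫ x in (2/3:ℝ)..1, f x) := by
      have h1' : IntervalIntegrable f MeasureTheory.volume 0 (1/3) := by
        apply hInt; rw [Set.uIcc_of_le (by norm_num)]; exact Set.Icc_subset_Icc (le_refl _) (by norm_num)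
      have h2' : IntervalIntegrable f MeasureTheory.volume (1/3) (2/3) := by
        apply hInt; rw [Set.uIcc_of_le (by norm_num)]; exact Set.Icc_subset_Icc (by norm_num) (by norm_num)
      have h3' : IntervalIntegrable f MeasureTheory.volume (2/3) 1 := by
        apply hInt; rw [Set.uIcc_of_le (by norm_num)]; exact Set.Icc_subset_Icc (by norm_num) (le_refl _)
      rw [hIdef, ← intervalIntegral.integral_add_adjacent_intervals (h1'.trans h2') h3',
        ← intervalIntegral.integral_add_adjacent_intervals h1' h2']
    have e1 : (2/3) * I = 3 * ∫ x in (0:ℝ)..(1/3), f x := by rw [← hA', hA]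
    have e2 : (1/3) * (1 + I) = 3 * ∫ x in (1/3:ℝ)..(2/3), f x := by rw [← hB', hB]
    have e3 : 1/3 + (2/3) * I = 3 * ∫ x in (2/3:ℝ)..1, f x := by rw [← hC', hC]
    linarith
  -- integrability of the integrand
  have hcont2 : ContinuousOn (fun t => Real.sqrt (1 + f t ^ 2)) (Set.Icc 0 1) :=
    (Real.continuous_sqrt.comp_continuousOn
      ((continuousOn_const.add ((hcont.pow 2)))))
  have hInt2 : IntervalIntegrable (fun t => Real.sqrt (1 + f t ^ 2)) MeasureTheory.volume 0 1 := by
    apply ContinuousOn.intervalIntegrable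
    rwa [huIcc]
  constructor
  · -- lower bound
    have hlow : ∀ x ∈ Set.Icc (0:ℝ) 1, (2 + f x) / Real.sqrt 5 ≤ Real.sqrt (1 + f x ^ 2) := by
      intro x hx
      set y := f x
      have h5 : (0:ℝ) < Real.sqrt 5 := Real.sqrt_pos.mpr (by norm_num)
      rcases le_or_gt (2 + y) 0 with h | h
      · exact le_trans (div_nonpos_of_nonpos_of_nonneg h h5.le) (Real.sqrt_nonneg _)
      · rw [div_le_iff₀ h5]
        have hs : Real.sqrt (1 + y^2) * Real.sqrt 5 = Real.sqrt (5 * (1 + y^2)) := by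
          rw [← Real.sqrt_mul (by positivity), mul_comm]
        calc 2 + y ≤ Real.sqrt ((2+y)^2) := by rw [Real.sqrt_sq h.le]
          _ ≤ Real.sqrt (5 * (1 + y^2)) := Real.sqrt_le_sqrt (by nlinarith [sq_nonneg (1 - 2*y)])
          _ = Real.sqrt (1 + y^2) * Real.sqrt 5 := hs.symm
    have hmono : (∫ t in (0:ℝ)..1, (2 + f t) / Real.sqrt 5) ≤ ∫ t in (0:ℝ)..1, Real.sqrt (1 + f t ^ 2) := by
      apply intervalIntegral.integral_mono_on (by norm_num)
      · exact (intervalIntegrable_const.add hI01).div_const _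
      · exact hInt2
      · exact hlow
    have hval : (∫ t in (0:ℝ)..1, (2 + f t) / Real.sqrt 5) = (2 + I) / Real.sqrt 5 := by
      simp_rw [div_eq_mul_inv]
      rw [intervalIntegral.integral_mul_const,
        intervalIntegral.integral_add intervalIntegrable_const hI01]
      simp [hIdef]
    rw [hval, hIval] at hmono
    have h5 : Real.sqrt 5 * Real.sqrt 5 = 5 := Real.mul_self_sqrt (by norm_num)
    have h5p : (0:ℝ) < Real.sqrt 5 := Real.sqrt_pos.mpr (by norm_num)
    have : Real.sqrt 5 / 2 = (2 + 1/2) / Real.sqrt 5 := by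
      rw [div_eq_div_iff (by norm_num : (2:ℝ) ≠ 0) h5p.ne']
      nlinarith
    linarith [hmono, this.le]
  · -- upper bound
    have hup : ∀ x ∈ Set.Icc (0:ℝ) 1, Real.sqrt (1 + f x ^ 2) ≤ 3/2 := by
      intro x hx
      obtain ⟨hx0, hx1⟩ := hbd x hx
      calc Real.sqrt (1 + f x ^ 2) ≤ Real.sqrt ((3/2)^2) := by
            apply Real.sqrt_le_sqrt; nlinarith
        _ = 3/2 := Real.sqrt_sq (by norm_num)
    calc (∫ t in (0:ℝ)..1, Real.sqrt (1 + f t ^ 2)) ≤ ∫ _t in (0:ℝ)..1, (3/2 : ℝ) :=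
          intervalIntegral.integral_mono_on (by norm_num) hInt2 intervalIntegrable_const hup
      _ = 3/2 := by simp
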